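/- Let Z = (z_1,…,z_{N'}) : M^{1+n} → ℂ^{N'} satisfy □z_i = 0 and ∂^μ z_i ∂_μ z_j = 0 for all i,j. If functions f_j, g_j : ℂ^{N'} × ℂ^{N'} → ℂ (of Z and its conjugate) satisfy ∂f_j/∂z̄_k + ∂g_k/∂z_j = 0 for all j,k, then the current J_μ = Σ_j (f_j ∂_μ z_j + g_j ∂_μ z̄_j) is conserved: ∂^μ J_μ = 0. -/

import Mathlib

/-- The partial derivative `∂_μ` of a function on `(1+n)`-dimensional
Minkowski space `M^{1+n} = Fin (n+1) → ℝ` (coordinate `0` is time). -/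
noncomputable def pd {n : ℕ} {E : Type*} [NormedAddCommGroup E] [NormedSpace ℝ E]
    (μ : Fin (n + 1)) (f : (Fin (n + 1) → ℝ) → E) (x : Fin (n + 1) → ℝ) : E :=
  deriv (fun t : ℝ => f (x + t • (Pi.single μ 1 : Fin (n + 1) → ℝ))) 0

/-- The Minkowski signed sum `Σ'_μ A_μ = A_0 − Σ_{i=1}^n A_i`, implementing
index contraction with the metric `diag(1,−1,…,−1)`. -/
def msum {n : ℕ} {E : Type*} [AddCommGroup E] (A : Fin (n + 1) → E) : E :=
  A 0 - ∑ i ∈ Finset.univ.erase (0 : Fin (n + 1)), A i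

section aux

variable {n : ℕ}

theorem line_hasDerivAt (μ : Fin (n + 1)) (x : Fin (n + 1) → ℝ) :
    HasDerivAt (fun t : ℝ => x + t • (Pi.single μ 1 : Fin (n + 1) → ℝ))
      (Pi.single μ 1) 0 := by
  simpa using ((hasDerivAt_id (0 : ℝ)).smul_const
    (Pi.single μ 1 : Fin (n + 1) → ℝ)).const_add x

theorem pd_of_hasDerivAt {E : Type*} [NormedAddCommGroup E] [NormedSpace ℝ E]
    {μ : Fin (n + 1)} {f : (Fin (n + 1) → ℝ) → E} {x : Fin (n + 1) → ℝ} {v : E}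
    (h : HasDerivAt (fun t : ℝ =>
      f (x + t • (Pi.single μ 1 : Fin (n + 1) → ℝ))) v 0) :
    pd μ f x = v := h.deriv

theorem hasDerivAt_comp_line {E : Type*} [NormedAddCommGroup E] [NormedSpace ℝ E]
    (μ : Fin (n + 1)) {f : (Fin (n + 1) → ℝ) → E} {x : Fin (n + 1) → ℝ}
    (hf : DifferentiableAt ℝ f x) :
    HasDerivAt (fun t : ℝ => f (x + t • (Pi.single μ 1 : Fin (n + 1) → ℝ)))
      (fderiv ℝ f x (Pi.single μ 1)) 0 := by
  exact HasFDerivAt.comp_hasDerivAt_of_eq (0 : ℝ) hf.hasFDerivAt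
    (line_hasDerivAt μ x) (by simp)

theorem pd_eq_fderiv {E : Type*} [NormedAddCommGroup E] [NormedSpace ℝ E]
    (μ : Fin (n + 1)) {f : (Fin (n + 1) → ℝ) → E} {x : Fin (n + 1) → ℝ}
    (hf : DifferentiableAt ℝ f x) :
    pd μ f x = fderiv ℝ f x (Pi.single μ 1) :=
  pd_of_hasDerivAt (hasDerivAt_comp_line μ hf)

theorem pd_star (μ : Fin (n + 1)) (f : (Fin (n + 1) → ℝ) → ℂ) (x : Fin (n + 1) → ℝ) :
    pd μ (fun y => star (f y)) x = star (pd μ f x) := by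
  unfold pd
  exact deriv.star

theorem msum_add {E : Type*} [AddCommGroup E] (A B : Fin (n + 1) → E) :
    msum (fun μ => A μ + B μ) = msum A + msum B := by
  simp only [msum, Finset.sum_add_distrib]; abel

theorem msum_mul_left (c : ℂ) (A : Fin (n + 1) → ℂ) :
    msum (fun μ => c * A μ) = c * msum A := by
  simp only [msum, Finset.mul_sum, mul_sub]

theorem msum_star (A : Fin (n + 1) → ℂ) :
    msum (fun μ => star (A μ)) = star (msum A) := by
  simp only [msum, star_sub, star_sum]

theorem msum_sum {ι : Type*} (s : Finset ι) (A : ι → Fin (n + 1) → ℂ) :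
    msum (fun μ => ∑ j ∈ s, A j μ) = ∑ j ∈ s, msum (A j) := by
  simp only [msum, Finset.sum_sub_distrib]
  rw [Finset.sum_comm]

end aux

section clm

variable {N : ℕ}

theorem clm_decomp (L : ((Fin N → ℂ) × (Fin N → ℂ)) →L[ℂ] ℂ) (u v : Fin N → ℂ) :
    L (u, v) = (∑ k : Fin N, u k * L (Pi.single k 1, 0)) +
      ∑ k : Fin N, v k * L (0, Pi.single k 1) := by
  have h : ((u, v) : (Fin N → ℂ) × (Fin N → ℂ)) =
      (∑ k : Fin N, u k • ((Pi.single k 1, 0) : (Fin N → ℂ) × (Fin N → ℂ)))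
      + ∑ k : Fin N, v k • (((0 : Fin N → ℂ), Pi.single k 1) :
          (Fin N → ℂ) × (Fin N → ℂ)) := by
    rw [Prod.ext_iff]
    constructor <;>
    · simp only [Prod.fst_sum, Prod.snd_sum, Prod.smul_mk, Prod.fst_add, Prod.snd_add,
        smul_zero, Finset.sum_const_zero, add_zero, zero_add]
      funext i
      simp [Finset.sum_apply, Pi.single_apply, mul_ite, Finset.sum_ite_eq']
  rw [h, map_add, map_sum, map_sum]
  simp only [map_smul, smul_eq_mul]

theorem deriv_update_fst {F : (Fin N → ℂ) → (Fin N → ℂ) → ℂ}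
    (hF : Differentiable ℂ (fun q : (Fin N → ℂ) × (Fin N → ℂ) => F q.1 q.2))
    (z w : Fin N → ℂ) (k : Fin N) :
    deriv (fun t : ℂ => F (Function.update z k t) w) (z k)
      = fderiv ℂ (fun q : (Fin N → ℂ) × (Fin N → ℂ) => F q.1 q.2) (z, w)
          ((Pi.single k 1 : Fin N → ℂ), 0) := by
  have hc : HasDerivAt
      (fun t : ℂ => ((Function.update z k t, w) : (Fin N → ℂ) × (Fin N → ℂ)))
      ((Pi.single k 1 : Fin N → ℂ), (0 : Fin N → ℂ)) (z k) :=
    (hasDerivAt_update z k (z k)).prodMk (hasDerivAt_const _ _)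
  exact (HasFDerivAt.comp_hasDerivAt_of_eq (z k)
    (hF (z, w)).hasFDerivAt hc (by simp)).deriv

theorem deriv_update_snd {F : (Fin N → ℂ) → (Fin N → ℂ) → ℂ}
    (hF : Differentiable ℂ (fun q : (Fin N → ℂ) × (Fin N → ℂ) => F q.1 q.2))
    (z w : Fin N → ℂ) (k : Fin N) :
    deriv (fun t : ℂ => F z (Function.update w k t)) (w k)
      = fderiv ℂ (fun q : (Fin N → ℂ) × (Fin N → ℂ) => F q.1 q.2) (z, w)
          ((0 : Fin N → ℂ), (Pi.single k 1 : Fin N → ℂ)) := by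
  have hc : HasDerivAt
      (fun t : ℂ => ((z, Function.update w k t) : (Fin N → ℂ) × (Fin N → ℂ)))
      ((0 : Fin N → ℂ), (Pi.single k 1 : Fin N → ℂ)) (w k) :=
    (hasDerivAt_const _ _).prodMk (hasDerivAt_update w k (w k))
  exact (HasFDerivAt.comp_hasDerivAt_of_eq (w k)
    (hF (z, w)).hasFDerivAt hc (by simp)).deriv

end clm


/-- Multiplier method for conserved currents of the Grassmann submodel.
If `Z : M^{1+n} → ℂ^{N'}` satisfies `□z_i = 0` and `∂^μ z_i ∂_μ z_j = 0`, and
coefficient functions `f_j(Z,Z̄)`, `g_j(Z,Z̄)` (encoded as functions of the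
independent variables `z` and `z̄ = w`) satisfy `∂f_j/∂z̄_k + ∂g_k/∂z_j = 0`,
then the current `J_μ = Σ_j (f_j ∂_μ z_j + g_j ∂_μ z̄_j)` is conserved. -/
theorem multiplier_conserved_current {n N' : ℕ}
    (Z : (Fin (n + 1) → ℝ) → (Fin N' → ℂ))
    (hZ : ContDiff ℝ (⊤ : ℕ∞) Z)
    (hwave : ∀ i x, msum (fun μ => pd μ (pd μ (fun y => Z y i)) x) = 0)
    (hnull : ∀ i j x,
      msum (fun μ => pd μ (fun y => Z y i) x * pd μ (fun y => Z y j) x) = 0)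
    (f g : Fin N' → (Fin N' → ℂ) → (Fin N' → ℂ) → ℂ)
    (hf : ∀ j, Differentiable ℂ (fun q : (Fin N' → ℂ) × (Fin N' → ℂ) => f j q.1 q.2))
    (hg : ∀ j, Differentiable ℂ (fun q : (Fin N' → ℂ) × (Fin N' → ℂ) => g j q.1 q.2))
    (hcond : ∀ j k z w,
      deriv (fun t : ℂ => f j z (Function.update w k t)) (w k) +
        deriv (fun t : ℂ => g k (Function.update z j t) w) (z j) = 0) :
    ∀ x, msum (fun μ => pd μ (fun y =>
        ∑ j : Fin N',
          (f j (Z y) (fun i => star (Z y i)) * pd μ (fun y' => Z y' j) y +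
            g j (Z y) (fun i => star (Z y i)) * pd μ (fun y' => star (Z y' j)) y)) x) = 0 := by
  intro x
  have hZj : ∀ j, ContDiff ℝ (⊤ : ℕ∞) (fun y => Z y j) := fun j => (contDiff_pi.1 hZ) j
  have hZjd : ∀ j, Differentiable ℝ (fun y => Z y j) := fun j =>
    (hZj j).differentiable (by simp)
  set G : Fin N' → Fin (n + 1) → (Fin (n + 1) → ℝ) → ℂ :=
    fun j μ y => fderiv ℝ (fun y' => Z y' j) y (Pi.single μ 1) with hGdef
  have hGsm : ∀ j μ, ContDiff ℝ (⊤ : ℕ∞) (G j μ) := fun j μ =>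
    ((hZj j).fderiv_right (by exact_mod_cast le_top)).clm_apply contDiff_const
  have hGd : ∀ j μ, Differentiable ℝ (G j μ) := fun j μ =>
    (hGsm j μ).differentiable (by simp)
  have hpdZ : ∀ j μ y, pd μ (fun y' => Z y' j) y = G j μ y := fun j μ y =>
    pd_eq_fderiv μ (hZjd j y)
  have hpdZs : ∀ j μ y, pd μ (fun y' => star (Z y' j)) y = star (G j μ y) := by
    intro j μ y
    have h := pd_star μ (fun y' => Z y' j) y
    rw [hpdZ] at h
    exact h
  set z : Fin N' → ℂ := Z x with hz
  set w : Fin N' → ℂ := fun i => star (Z x i) with hw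
  set Lf : Fin N' → ((Fin N' → ℂ) × (Fin N' → ℂ)) →L[ℂ] ℂ :=
    fun j => fderiv ℂ (fun q : (Fin N' → ℂ) × (Fin N' → ℂ) => f j q.1 q.2) (z, w) with hLf
  set Lg : Fin N' → ((Fin N' → ℂ) × (Fin N' → ℂ)) →L[ℂ] ℂ :=
    fun j => fderiv ℂ (fun q : (Fin N' → ℂ) × (Fin N' → ℂ) => g j q.1 q.2) (z, w) with hLg
  set W : Fin N' → Fin (n + 1) → ℂ :=
    fun j μ => fderiv ℝ (G j μ) x (Pi.single μ 1) with hWdef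
  -- curves
  have hcurve : ∀ (μ : Fin (n + 1)) k, HasDerivAt
      (fun t : ℝ => Z (x + t • (Pi.single μ 1 : Fin (n + 1) → ℝ)) k) (G k μ x) 0 :=
    fun μ k => hasDerivAt_comp_line μ (hZjd k x)
  have hZcurve : ∀ μ : Fin (n + 1), HasDerivAt
      (fun t : ℝ => Z (x + t • (Pi.single μ 1 : Fin (n + 1) → ℝ)))
      (fun k => G k μ x) 0 := fun μ => hasDerivAt_pi.2 (hcurve μ)
  have hscurve : ∀ μ : Fin (n + 1), HasDerivAt
      (fun t : ℝ => (fun i => star (Z (x + t • (Pi.single μ 1 : Fin (n + 1) → ℝ)) i)))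
      (fun k => star (G k μ x)) 0 :=
    fun μ => hasDerivAt_pi.2 fun k => (hcurve μ k).star
  have hfc : ∀ j (μ : Fin (n + 1)), HasDerivAt (fun t : ℝ =>
      f j (Z (x + t • (Pi.single μ 1 : Fin (n + 1) → ℝ)))
        (fun i => star (Z (x + t • (Pi.single μ 1 : Fin (n + 1) → ℝ)) i)))
      (Lf j ((fun k => G k μ x), (fun k => star (G k μ x)))) 0 := by
    intro j μ
    exact HasFDerivAt.comp_hasDerivAt_of_eq (0 : ℝ)
      (((hf j (z, w)).hasFDerivAt).restrictScalars ℝ)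
      ((hZcurve μ).prodMk (hscurve μ)) (by simp [hz, hw])
  have hgc : ∀ j (μ : Fin (n + 1)), HasDerivAt (fun t : ℝ =>
      g j (Z (x + t • (Pi.single μ 1 : Fin (n + 1) → ℝ)))
        (fun i => star (Z (x + t • (Pi.single μ 1 : Fin (n + 1) → ℝ)) i)))
      (Lg j ((fun k => G k μ x), (fun k => star (G k μ x)))) 0 := by
    intro j μ
    exact HasFDerivAt.comp_hasDerivAt_of_eq (0 : ℝ)
      (((hg j (z, w)).hasFDerivAt).restrictScalars ℝ)
      ((hZcurve μ).prodMk (hscurve μ)) (by simp [hz, hw])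
  have hGcurve : ∀ j (μ : Fin (n + 1)), HasDerivAt
      (fun t : ℝ => G j μ (x + t • (Pi.single μ 1 : Fin (n + 1) → ℝ))) (W j μ) 0 :=
    fun j μ => hasDerivAt_comp_line μ (hGd j μ x)
  -- the key pointwise computation
  have key : ∀ μ : Fin (n + 1), pd μ (fun y =>
      ∑ j : Fin N',
        (f j (Z y) (fun i => star (Z y i)) * pd μ (fun y' => Z y' j) y +
          g j (Z y) (fun i => star (Z y i)) * pd μ (fun y' => star (Z y' j)) y)) x
      = ∑ j : Fin N',
        ((Lf j ((fun k => G k μ x), (fun k => star (G k μ x))) * G j μ x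
            + f j z w * W j μ)
          + (Lg j ((fun k => G k μ x), (fun k => star (G k μ x))) * star (G j μ x)
            + g j z w * star (W j μ))) := by
    intro μ
    have hfun : (fun y => ∑ j : Fin N',
        (f j (Z y) (fun i => star (Z y i)) * pd μ (fun y' => Z y' j) y +
          g j (Z y) (fun i => star (Z y i)) * pd μ (fun y' => star (Z y' j)) y))
        = fun y => ∑ j : Fin N',
        (f j (Z y) (fun i => star (Z y i)) * G j μ y +
          g j (Z y) (fun i => star (Z y i)) * star (G j μ y)) := by
      funext y
      exact Finset.sum_congr rfl fun j _ => by rw [hpdZ, hpdZs]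
    rw [hfun]
    refine pd_of_hasDerivAt ?_
    refine HasDerivAt.fun_sum fun j _ => ?_
    have hd := ((hfc j μ).fun_mul (hGcurve j μ)).fun_add ((hgc j μ).fun_mul ((hGcurve j μ).star))
    convert hd using 1
    simp [hz, hw]
  rw [funext key]
  -- null condition in G form
  have hnull0 : ∀ k j : Fin N', msum (fun μ => G k μ x * G j μ x) = 0 := by
    intro k j
    have h := hnull k j x
    simpa only [hpdZ] using h
  have hsnull : ∀ k j : Fin N', msum (fun μ => star (G k μ x) * star (G j μ x)) = 0 := by
    intro k j
    have e1 : (fun μ : Fin (n + 1) => star (G k μ x) * star (G j μ x))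
        = fun μ => star (G k μ x * G j μ x) := by
      funext μ; rw [star_mul, mul_comm]
    rw [e1, msum_star, hnull0, star_zero]
  have hW0 : ∀ j : Fin N', msum (fun μ => W j μ) = 0 := by
    intro j
    have h1 : ∀ μ : Fin (n + 1), pd μ (pd μ (fun y => Z y j)) x = W j μ := by
      intro μ
      have hfn : pd μ (fun y => Z y j) = G j μ := funext fun y => hpdZ j μ y
      rw [hfn, pd_eq_fderiv μ (hGd j μ x)]
    have h := hwave j x
    rwa [funext h1] at h
  -- expand the CLM applications
  have hx1 : ∀ (L : ((Fin N' → ℂ) × (Fin N' → ℂ)) →L[ℂ] ℂ) (c : ℂ) (μ : Fin (n + 1)),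
      L ((fun k => G k μ x), fun k => star (G k μ x)) * c
        = (∑ k : Fin N', L (Pi.single k 1, 0) * (G k μ x * c))
          + ∑ k : Fin N', L (0, Pi.single k 1) * (star (G k μ x) * c) := by
    intro L c μ
    rw [clm_decomp, add_mul, Finset.sum_mul, Finset.sum_mul]
    congr 1 <;> exact Finset.sum_congr rfl fun k _ => by ring
  simp only [hx1]
  simp only [msum_add, msum_sum, msum_mul_left]
  simp only [hnull0, hsnull, mul_zero, Finset.sum_const_zero, add_zero, zero_add]
  have hWm : ∀ j : Fin N',
      msum (fun μ => g j z w * star (W j μ)) = 0 := by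
    intro j
    have e1 : (fun μ : Fin (n + 1) => g j z w * star (W j μ))
        = fun μ => g j z w * star (W j μ) := rfl
    rw [msum_mul_left]
    have : msum (fun μ => star (W j μ)) = 0 := by rw [msum_star, hW0, star_zero]
    rw [this, mul_zero]
  simp only [hW0, msum_star, star_zero, mul_zero, add_zero, zero_add]
  -- reorder the mixed terms
  have hM : ∀ k j : Fin N', msum (fun μ => G k μ x * star (G j μ x))
      = msum (fun μ => star (G j μ x) * G k μ x) :=
    fun k j => congrArg msum (funext fun μ => mul_comm _ _)
  simp only [hM]
  rw [Finset.sum_add_distrib]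
  have hsw : (∑ j : Fin N', ∑ k : Fin N',
        Lg j (Pi.single k 1, 0) * msum (fun μ => star (G j μ x) * G k μ x))
      = ∑ j : Fin N', ∑ k : Fin N',
        Lg k (Pi.single j 1, 0) * msum (fun μ => star (G k μ x) * G j μ x) :=
    Finset.sum_comm
  rw [hsw, ← Finset.sum_add_distrib]
  refine Finset.sum_eq_zero fun j _ => ?_
  rw [← Finset.sum_add_distrib]
  refine Finset.sum_eq_zero fun k _ => ?_
  rw [← add_mul]
  have hid1 : Lf j ((0 : Fin N' → ℂ), Pi.single k 1)
      = deriv (fun t : ℂ => f j z (Function.update w k t)) (w k) :=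
    (deriv_update_snd (hf j) z w k).symm
  have hid2 : Lg k ((Pi.single j 1 : Fin N' → ℂ), 0)
      = deriv (fun t : ℂ => g k (Function.update z j t) w) (z j) :=
    (deriv_update_fst (hg k) z w j).symm
  rw [hid1, hid2, hcond j k z w, zero_mul]
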